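/- The discriminant group A_M = M*/M of the lattice M (with basis l', e_1,...,e_5, form l'² = e_i² = -2, l'·e_i = 1, e_i·e_j = 0 for i≠j) is isomorphic to (Z/2Z)^4. -/

import Mathlib

open Matrix BigOperators

/-- Gram matrix of the rank 6 lattice `M` with basis `l', e₁, …, e₅`:
`l'² = eᵢ² = -2`, `l'·eᵢ = 1`, `eᵢ·eⱼ = 0` for `i ≠ j`.
Index `0` corresponds to `l'` and index `i.succ` to `eᵢ`. -/
def Mgram : Matrix (Fin 6) (Fin 6) ℤ :=
  fun i j => if i = j then -2 else if i = 0 ∨ j = 0 then 1 else 0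

/-- The bilinear form of the lattice `M`. -/
def bM (x y : Fin 6 → ℤ) : ℤ := x ⬝ᵥ (Mgram.mulVec y)

/-- The basis vector `l'`. -/
def lvec : Fin 6 → ℤ := fun j => if j = 0 then 1 else 0

/-- The basis vector `eᵢ`. -/
def ev (i : Fin 5) : Fin 6 → ℤ := fun j => if j = i.succ then 1 else 0

/-- The element `h = 2l' + e₁ + ⋯ + e₅`. -/
def hv : Fin 6 → ℤ := fun j => if j = 0 then 2 else 1

/-- The ℚ-valued bilinear form attached to an integral Gram matrix `A`. -/
def gq {n : ℕ} (A : Matrix (Fin n) (Fin n) ℤ) (y z : Fin n → ℚ) : ℚ :=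
  y ⬝ᵥ ((A.map (Int.cast : ℤ → ℚ)).mulVec z)

lemma gq_add_left {n : ℕ} (A : Matrix (Fin n) (Fin n) ℤ) (y y' z : Fin n → ℚ) :
    gq A (y + y') z = gq A y z + gq A y' z := by
  simp [gq, add_dotProduct]

lemma gq_zsmul_left {n : ℕ} (A : Matrix (Fin n) (Fin n) ℤ) (c : ℤ) (y z : Fin n → ℚ) :
    gq A (c • y) z = (c : ℚ) * gq A y z := by
  rw [gq, smul_dotProduct, zsmul_eq_mul]; rfl

/-- The dual lattice `L* = {y ∈ L ⊗ ℚ : y·x ∈ ℤ for all x ∈ L}` of the lattice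
with Gram matrix `A`, as a ℤ-submodule of `ℚⁿ`. -/
def dualL {n : ℕ} (A : Matrix (Fin n) (Fin n) ℤ) : Submodule ℤ (Fin n → ℚ) where
  carrier := {y | ∀ x : Fin n → ℤ, ∃ m : ℤ, gq A y (fun i => (x i : ℚ)) = (m : ℚ)}
  add_mem' := by
    intro a b ha hb x
    obtain ⟨m1, h1⟩ := ha x
    obtain ⟨m2, h2⟩ := hb x
    exact ⟨m1 + m2, by rw [gq_add_left, h1, h2]; push_cast; ring⟩
  zero_mem' := by
    intro x
    exact ⟨0, by simp [gq]⟩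
  smul_mem' := by
    intro c a ha x
    obtain ⟨m, h⟩ := ha x
    exact ⟨c * m, by rw [gq_zsmul_left, h]; push_cast; ring⟩

/-- The lattice `L = ℤⁿ` sitting inside `ℚⁿ` (spanned by the standard basis). -/
def stdL (n : ℕ) : Submodule ℤ (Fin n → ℚ) :=
  Submodule.span ℤ (Set.range fun i : Fin n => fun j => if j = i then (1 : ℚ) else 0)

/-- The discriminant group `A_L = L*/L` of the lattice with Gram matrix `A`. -/
abbrev discG {n : ℕ} (A : Matrix (Fin n) (Fin n) ℤ) :=
  (dualL A) ⧸ (Submodule.comap (dualL A).subtype (stdL n))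

-- ======== auxiliary lemmas ========

lemma gq_eq {n : ℕ} (A : Matrix (Fin n) (Fin n) ℤ) (y z : Fin n → ℚ) :
    gq A y z = ∑ j, z j * ∑ i, y i * (A i j : ℚ) := by
  simp only [gq, dotProduct, Matrix.mulVec, Matrix.map_apply, Finset.mul_sum, Finset.sum_mul]
  rw [Finset.sum_comm]
  exact Finset.sum_congr rfl fun j _ => Finset.sum_congr rfl fun i _ => by ring

lemma mem_dual_iff {n : ℕ} (A : Matrix (Fin n) (Fin n) ℤ) (y : Fin n → ℚ) :
    y ∈ dualL A ↔ ∀ j : Fin n, ∃ m : ℤ, ∑ i, y i * (A i j : ℚ) = (m : ℚ) := by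
  constructor
  · intro hy j
    obtain ⟨m, hm⟩ := hy (fun i => if i = j then 1 else 0)
    refine ⟨m, ?_⟩
    rw [gq_eq] at hm
    push_cast at hm
    simpa only [ite_mul, one_mul, zero_mul, Finset.sum_ite_eq', Finset.mem_univ,
      if_true] using hm
  · intro h x
    choose m hm using h
    refine ⟨∑ j, x j * m j, ?_⟩
    rw [gq_eq]
    push_cast
    exact Finset.sum_congr rfl fun j _ => by rw [hm j]

def intPts (n : ℕ) : Submodule ℤ (Fin n → ℚ) where
  carrier := {y | ∀ i, ∃ m : ℤ, y i = (m : ℚ)}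
  add_mem' := by
    intro a b ha hb i
    obtain ⟨m1, h1⟩ := ha i; obtain ⟨m2, h2⟩ := hb i
    exact ⟨m1 + m2, by simp [h1, h2]⟩
  zero_mem' := fun i => ⟨0, by simp⟩
  smul_mem' := by
    intro c a ha i
    obtain ⟨m, h⟩ := ha i
    exact ⟨c * m, by simp [h]⟩

lemma stdL_le_intPts (n : ℕ) : stdL n ≤ intPts n := by
  rw [stdL, Submodule.span_le]
  rintro _ ⟨i, rfl⟩ j
  exact ⟨if j = i then 1 else 0, by by_cases hji : j = i <;> simp [hji]⟩

lemma mem_stdL {n : ℕ} (y : Fin n → ℚ) (h : ∀ i, ∃ m : ℤ, y i = (m : ℚ)) : y ∈ stdL n := by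
  choose m hm using h
  have hy : y = ∑ i, (m i) • (fun j => if j = i then (1 : ℚ) else 0) := by
    funext j
    simp only [Finset.sum_apply, Pi.smul_apply, smul_ite, smul_zero, Finset.sum_ite_eq,
      Finset.mem_univ, if_true]
    simp [hm j]
  rw [hy]
  exact Submodule.sum_mem _ fun i _ =>
    Submodule.smul_mem _ _ (Submodule.subset_span ⟨i, rfl⟩)

-- concrete column sums for `Mgram`
lemma S0 (y : Fin 6 → ℚ) :
    ∑ i, y i * (Mgram i 0 : ℚ) = -2*y 0 + y 1 + y 2 + y 3 + y 4 + y 5 := by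
  simp (config := { decide := true }) only [Fin.sum_univ_six, Mgram]; push_cast; ring
lemma S1 (y : Fin 6 → ℚ) : ∑ i, y i * (Mgram i 1 : ℚ) = y 0 - 2*y 1 := by
  simp (config := { decide := true }) only [Fin.sum_univ_six, Mgram]; push_cast; ring
lemma S2 (y : Fin 6 → ℚ) : ∑ i, y i * (Mgram i 2 : ℚ) = y 0 - 2*y 2 := by
  simp (config := { decide := true }) only [Fin.sum_univ_six, Mgram]; push_cast; ring
lemma S3 (y : Fin 6 → ℚ) : ∑ i, y i * (Mgram i 3 : ℚ) = y 0 - 2*y 3 := by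
  simp (config := { decide := true }) only [Fin.sum_univ_six, Mgram]; push_cast; ring
lemma S4 (y : Fin 6 → ℚ) : ∑ i, y i * (Mgram i 4 : ℚ) = y 0 - 2*y 4 := by
  simp (config := { decide := true }) only [Fin.sum_univ_six, Mgram]; push_cast; ring
lemma S5 (y : Fin 6 → ℚ) : ∑ i, y i * (Mgram i 5 : ℚ) = y 0 - 2*y 5 := by
  simp (config := { decide := true }) only [Fin.sum_univ_six, Mgram]; push_cast; ring

/-- Structure of dual vectors of `M`: integer data. -/
lemma dual_struct (y : Fin 6 → ℚ) (hy : y ∈ dualL Mgram) :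
    ∃ m : Fin 6 → ℤ,
      y 0 = ((2*m 0 + m 1 + m 2 + m 3 + m 4 + m 5 : ℤ) : ℚ) ∧
      (∀ j : Fin 6, j ≠ 0 → y 0 - 2 * y j = (m j : ℚ)) := by
  rw [mem_dual_iff] at hy
  choose m hm using hy
  have h0 := hm 0; rw [S0] at h0
  have h1 := hm 1; rw [S1] at h1
  have h2 := hm 2; rw [S2] at h2
  have h3 := hm 3; rw [S3] at h3
  have h4 := hm 4; rw [S4] at h4
  have h5 := hm 5; rw [S5] at h5
  refine ⟨m, ?_, ?_⟩
  · push_cast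
    linear_combination 2*h0 + h1 + h2 + h3 + h4 + h5
  · intro j hj
    have hval : j = 1 ∨ j = 2 ∨ j = 3 ∨ j = 4 ∨ j = 5 := by
      fin_cases j
      · exact absurd rfl hj
      all_goals decide
    rcases hval with rfl | rfl | rfl | rfl | rfl
    exacts [h1, h2, h3, h4, h5]

lemma dual_half_int (y : Fin 6 → ℚ) (hy : y ∈ dualL Mgram) (i : Fin 6) :
    ∃ m : ℤ, 2 * y i = (m : ℚ) := by
  obtain ⟨m, h0, hj⟩ := dual_struct y hy
  by_cases hi : i = 0
  · subst hi
    exact ⟨2*(2*m 0 + m 1 + m 2 + m 3 + m 4 + m 5), by rw [h0]; push_cast; ring⟩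
  · have h := hj i hi
    refine ⟨2*m 0 + m 1 + m 2 + m 3 + m 4 + m 5 - m i, ?_⟩
    push_cast
    rw [h0] at h
    push_cast at h
    linarith

def zval (q : ℚ) : ZMod 2 := (q.num : ZMod 2)

lemma zval_intCast (a : ℤ) : zval ((a : ℚ)) = (a : ZMod 2) := by simp [zval]

def emb4 (j : Fin 4) : Fin 6 := ⟨j.1 + 1, by omega⟩

/-- The parity homomorphism `M* → (ℤ/2)⁴`. -/
def phiM : (dualL Mgram) →+ (Fin 4 → ZMod 2) where
  toFun y := fun j => zval (2 * y.1 (emb4 j))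
  map_zero' := by funext j; simp [zval]
  map_add' y z := by
    funext j
    obtain ⟨a, ha⟩ := dual_half_int y.1 y.2 (emb4 j)
    obtain ⟨b, hb⟩ := dual_half_int z.1 z.2 (emb4 j)
    simp only [Submodule.coe_add, Pi.add_apply]
    rw [show (2:ℚ) * (y.1 (emb4 j) + z.1 (emb4 j)) = ((a+b:ℤ):ℚ) by push_cast; rw [mul_add, ha, hb],
      ha, hb, zval_intCast, zval_intCast, zval_intCast]
    push_cast; ring

lemma ker_sub : Submodule.comap (dualL Mgram).subtype (stdL 6) ≤
    LinearMap.ker (phiM.toIntLinearMap) := by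
  intro y hy
  have h := stdL_le_intPts 6 hy
  rw [LinearMap.mem_ker]
  funext j
  obtain ⟨m, hm⟩ := h (emb4 j)
  have hm' : y.1 (emb4 j) = (m : ℚ) := hm
  show zval (2 * y.1 (emb4 j)) = 0
  rw [show (2:ℚ) * y.1 (emb4 j) = ((2*m : ℤ):ℚ) by rw [hm']; push_cast; ring, zval_intCast]
  rw [ZMod.intCast_zmod_eq_zero_iff_dvd]
  exact ⟨m, rfl⟩

lemma phi_ker_le (y : dualL Mgram) (h : phiM y = 0) :
    y ∈ Submodule.comap (dualL Mgram).subtype (stdL 6) := by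
  obtain ⟨m, h0, hj⟩ := dual_struct y.1 y.2
  set a : ℤ := 2*m 0 + m 1 + m 2 + m 3 + m 4 + m 5 with ha
  have key : ∀ j : Fin 6, j ≠ 0 → 2 * y.1 j = ((a - m j : ℤ) : ℚ) := by
    intro j hjne
    have hh := hj j hjne
    rw [h0] at hh
    push_cast at hh ⊢
    linarith
  have hpar : ∀ j : Fin 4, (2 : ℤ) ∣ (a - m (emb4 j)) := by
    intro j
    have hφ : zval (2 * y.1 (emb4 j)) = 0 := congrFun h j
    rw [key (emb4 j) (fun he => absurd (congrArg Fin.val he) (Nat.succ_ne_zero j.1)), zval_intCast,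
      ZMod.intCast_zmod_eq_zero_iff_dvd] at hφ
    exact hφ
  have p1 := hpar 0; have p2 := hpar 1; have p3 := hpar 2; have p4 := hpar 3
  rw [show emb4 0 = 1 from rfl] at p1
  rw [show emb4 1 = 2 from rfl] at p2
  rw [show emb4 2 = 3 from rfl] at p3
  rw [show emb4 3 = 4 from rfl] at p4
  have p5 : (2:ℤ) ∣ (a - m 5) := by
    have hsum : (a - m 1) + (a - m 2) + (a - m 3) + (a - m 4) + (a - m 5)
        = 2*m 0 + 4*a := by rw [ha]; ring
    omega
  show y.1 ∈ stdL 6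
  apply mem_stdL
  intro i
  by_cases hi : i = 0
  · subst hi; exact ⟨a, h0⟩
  · have hk := key i hi
    have hdvd : (2:ℤ) ∣ (a - m i) := by
      have hval : i = 1 ∨ i = 2 ∨ i = 3 ∨ i = 4 ∨ i = 5 := by
        fin_cases i
        · exact absurd rfl hi
        all_goals decide
      rcases hval with rfl | rfl | rfl | rfl | rfl
      exacts [p1, p2, p3, p4, p5]
    obtain ⟨k, hkk⟩ := hdvd
    refine ⟨k, ?_⟩
    rw [hkk] at hk
    push_cast at hk
    linarith

lemma phi_surj : Function.Surjective phiM := by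
  intro b
  set c : Fin 4 → ℤ := fun j => ((b j).val : ℤ) with hc
  set v : Fin 6 → ℚ := fun i =>
    (if i = 1 then (c 0 : ℚ) else if i = 2 then c 1 else if i = 3 then c 2
      else if i = 4 then c 3 else if i = 5 then c 0 + c 1 + c 2 + c 3 else 0) / 2 with hvdef
  have hv0 : v 0 = 0 := by simp (config := { decide := true }) [hvdef]
  have hv1 : v 1 = c 0 / 2 := by simp (config := { decide := true }) [hvdef]
  have hv2 : v 2 = c 1 / 2 := by simp (config := { decide := true }) [hvdef]
  have hv3 : v 3 = c 2 / 2 := by simp (config := { decide := true }) [hvdef]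
  have hv4 : v 4 = c 3 / 2 := by simp (config := { decide := true }) [hvdef]
  have hv5 : v 5 = (c 0 + c 1 + c 2 + c 3) / 2 := by
    simp (config := { decide := true }) [hvdef]
  have hvdual : v ∈ dualL Mgram := by
    rw [mem_dual_iff]
    intro j
    fin_cases j
    · exact ⟨c 0 + c 1 + c 2 + c 3, by
        show ∑ i, v i * (Mgram i 0 : ℚ) = _
        rw [S0, hv0, hv1, hv2, hv3, hv4, hv5]; push_cast; ring⟩
    · exact ⟨-c 0, by
        show ∑ i, v i * (Mgram i 1 : ℚ) = _
        rw [S1, hv0, hv1]; push_cast; ring⟩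
    · exact ⟨-c 1, by
        show ∑ i, v i * (Mgram i 2 : ℚ) = _
        rw [S2, hv0, hv2]; push_cast; ring⟩
    · exact ⟨-c 2, by
        show ∑ i, v i * (Mgram i 3 : ℚ) = _
        rw [S3, hv0, hv3]; push_cast; ring⟩
    · exact ⟨-c 3, by
        show ∑ i, v i * (Mgram i 4 : ℚ) = _
        rw [S4, hv0, hv4]; push_cast; ring⟩
    · exact ⟨-(c 0 + c 1 + c 2 + c 3), by
        show ∑ i, v i * (Mgram i 5 : ℚ) = _
        rw [S5, hv0, hv5]; push_cast; ring⟩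
  refine ⟨⟨v, hvdual⟩, ?_⟩
  have hcz : ∀ j : Fin 4, ((c j : ℤ) : ZMod 2) = b j := by
    intro j
    rw [hc]
    push_cast
    simp [ZMod.natCast_val, ZMod.cast_id']
  funext j
  fin_cases j
  · show zval (2 * v 1) = b 0
    rw [hv1, show (2:ℚ) * (c 0 / 2) = ((c 0 : ℤ):ℚ) by ring, zval_intCast]
    exact hcz 0
  · show zval (2 * v 2) = b 1
    rw [hv2, show (2:ℚ) * (c 1 / 2) = ((c 1 : ℤ):ℚ) by ring, zval_intCast]
    exact hcz 1
  · show zval (2 * v 3) = b 2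
    rw [hv3, show (2:ℚ) * (c 2 / 2) = ((c 2 : ℤ):ℚ) by ring, zval_intCast]
    exact hcz 2
  · show zval (2 * v 4) = b 3
    rw [hv4, show (2:ℚ) * (c 3 / 2) = ((c 3 : ℤ):ℚ) by ring, zval_intCast]
    exact hcz 3

/-- The discriminant group `A_M = M*/M` of the lattice `M` is isomorphic
to `(ℤ/2ℤ)⁴`. -/
theorem discriminant_group_M :
    Nonempty (discG Mgram ≃+ (Fin 4 → ZMod 2)) := by
  set p := Submodule.comap (dualL Mgram).subtype (stdL 6) with hp
  set F := Submodule.liftQ p phiM.toIntLinearMap ker_sub with hF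
  have hFmk : ∀ y : dualL Mgram, F (Submodule.Quotient.mk y) = phiM y := fun y => rfl
  have hinj : Function.Injective F := by
    rw [← LinearMap.ker_eq_bot, Submodule.ker_liftQ_eq_bot]
    intro y hy
    exact phi_ker_le y hy
  have hsurj : Function.Surjective F := by
    intro b
    obtain ⟨y, hy⟩ := phi_surj b
    exact ⟨Submodule.Quotient.mk y, by rw [hFmk, hy]⟩
  exact ⟨(LinearEquiv.ofBijective F ⟨hinj, hsurj⟩).toAddEquiv⟩
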